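/- For an S-torsion-free R-module A, the kernel of λ_{S,A} : A → Λ_S(A) and the cokernel of λ_{S,A} are both modules over S⁻¹R (i.e., S-torsion-free and S-divisible), and Λ_S(A) is itself S-torsion-free. -/
import Mathlib


open Submodule

/-- The submodule `s·A` of an `R`-module `A`. -/
def smulTop (R : Type) [CommRing R] (s : R)
    (A : Type) [AddCommGroup A] [Module R A] : Submodule R A :=
  Ideal.span {s} • (⊤ : Submodule R A)

/-- The natural projection `A/tA → A/sA` when `s ∣ t`. -/
def transMap (R : Type) [CommRing R]
    (A : Type) [AddCommGroup A] [Module R A] (s t : R) (h : s ∣ t) :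
    (A ⧸ smulTop R t A) →ₗ[R] A ⧸ smulTop R s A :=
  Submodule.mapQ _ _ LinearMap.id (by
    rw [Submodule.comap_id]
    exact Submodule.smul_mono (Ideal.span_singleton_le_span_singleton.mpr h) le_rfl)

/-- The S-completion `Λ_S(A) = lim_{s ∈ S} A/sA`, realized as the submodule of compatible
families in `∏_{s ∈ S} A/sA`. -/
def sCompletion (R : Type) [CommRing R] (S : Submonoid R)
    (A : Type) [AddCommGroup A] [Module R A] :
    Submodule R (∀ s : S, A ⧸ smulTop R (s : R) A) where
  carrier := {x | ∀ (s t : S) (h : (s : R) ∣ (t : R)), transMap R A s t h (x t) = x s}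
  add_mem' := by
    intro x y hx hy s t h
    rw [Pi.add_apply, Pi.add_apply, map_add, hx s t h, hy s t h]
  zero_mem' := by
    intro s t h
    rw [Pi.zero_apply, Pi.zero_apply, map_zero]
  smul_mem' := by
    intro r x hx s t h
    rw [Pi.smul_apply, Pi.smul_apply, map_smul, hx s t h]

theorem mem_sCompletion (R : Type) [CommRing R] (S : Submonoid R)
    (A : Type) [AddCommGroup A] [Module R A]
    (x : ∀ s : S, A ⧸ smulTop R (s : R) A) :
    x ∈ sCompletion R S A ↔
      ∀ (s t : S) (h : (s : R) ∣ (t : R)), transMap R A s t h (x t) = x s :=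
  Iff.rfl

/-- The natural map `λ_{S,A} : A → Λ_S(A)`. -/
def lamMap (R : Type) [CommRing R] (S : Submonoid R)
    (A : Type) [AddCommGroup A] [Module R A] :
    A →ₗ[R] sCompletion R S A :=
  LinearMap.codRestrict (sCompletion R S A)
    (LinearMap.pi fun s : S => (smulTop R (s : R) A).mkQ)
    (by
      intro a s t h
      show transMap R A s t h ((smulTop R (t : R) A).mkQ a) = (smulTop R (s : R) A).mkQ a
      simp only [transMap, Submodule.mkQ_apply, Submodule.mapQ_apply, LinearMap.id_apply])


lemma mem_smulTop {R : Type} [CommRing R] {s : R} {A : Type} [AddCommGroup A] [Module R A]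
    {x : A} : x ∈ smulTop R s A ↔ ∃ a : A, s • a = x := by
  constructor
  · intro h
    refine Submodule.smul_induction_on h ?_ ?_
    · rintro r hr a -
      obtain ⟨c, rfl⟩ := Ideal.mem_span_singleton'.mp hr
      exact ⟨c • a, by rw [smul_smul, mul_comm]⟩
    · rintro x y ⟨a, rfl⟩ ⟨b, rfl⟩
      exact ⟨a + b, smul_add _ _ _⟩
  · rintro ⟨a, rfl⟩
    exact Submodule.smul_mem_smul (Ideal.mem_span_singleton_self s) trivial

lemma transMap_mk {R : Type} [CommRing R] {A : Type} [AddCommGroup A] [Module R A]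
    {s t : R} (h : s ∣ t) (a : A) :
    transMap R A s t h (Submodule.Quotient.mk a) = Submodule.Quotient.mk a := by
  simp [transMap, Submodule.mapQ_apply]

lemma lamMap_apply_coe {R : Type} [CommRing R] {S : Submonoid R} {A : Type}
    [AddCommGroup A] [Module R A] (a : A) (t : S) :
    (lamMap R S A a : ∀ s : S, A ⧸ smulTop R (s : R) A) t = Submodule.Quotient.mk a := rfl

/-- For an S-torsion-free `R`-module `A`: the kernel and the cokernel of
`λ_{S,A} : A → Λ_S(A)` are modules over `S⁻¹R` (every `s ∈ S` acts bijectively on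
them), and `Λ_S(A)` is itself S-torsion-free. -/
theorem sCompletion_of_torsionFree
    (R : Type) [CommRing R] (S : Submonoid R)
    (A : Type) [AddCommGroup A] [Module R A]
    (htf : ∀ (s : S) (x : A), (s : R) • x = 0 → x = 0) :
    (∀ s : S, Function.Bijective
      (fun x : LinearMap.ker (lamMap R S A) => (s : R) • x)) ∧
    (∀ s : S, Function.Bijective
      (fun x : (sCompletion R S A) ⧸ LinearMap.range (lamMap R S A) => (s : R) • x)) ∧
    (∀ (s : S) (x : sCompletion R S A), (s : R) • x = 0 → x = 0) := by
  have hcanc : ∀ (s : S) {x y : A}, (s : R) • x = (s : R) • y → x = y := by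
    intro s x y h
    have := htf s (x - y) (by rw [smul_sub, h, sub_self])
    exact sub_eq_zero.mp this
  -- part 3: the completion is S-torsion-free
  have h3 : ∀ (s : S) (x : sCompletion R S A), (s : R) • x = 0 → x = 0 := by
    intro s x hx
    apply Subtype.ext; funext t
    obtain ⟨a, ha⟩ := Submodule.Quotient.mk_surjective _ (x.1 (s * t))
    have h0 : (s : R) • (x.1 (s * t)) = 0 := by
      have := congrArg (fun z : sCompletion R S A => z.1 (s * t)) hx
      simpa using this
    rw [← ha, ← Submodule.Quotient.mk_smul, Submodule.Quotient.mk_eq_zero] at h0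
    obtain ⟨b, hb⟩ := mem_smulTop.mp h0
    rw [Submonoid.coe_mul, mul_smul] at hb
    have hab : (t : R) • b = a := hcanc s hb
    have hdvd : (t : R) ∣ ((s * t : S) : R) := ⟨(s : R), by rw [Submonoid.coe_mul, mul_comm]⟩
    have hc := x.2 t (s * t) hdvd
    rw [← hc, ← ha, transMap_mk, ← hab]
    have hz0 : ((0 : sCompletion R S A) : ∀ s : S, A ⧸ smulTop R (s : R) A) t = 0 := rfl
    rw [hz0, Submodule.Quotient.mk_eq_zero]
    exact mem_smulTop.mpr ⟨b, rfl⟩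
  -- kernel membership characterization
  have hker : ∀ a : A, a ∈ LinearMap.ker (lamMap R S A) ↔
      ∀ t : S, a ∈ smulTop R (t : R) A := by
    intro a
    rw [LinearMap.mem_ker]
    constructor
    · intro h t
      have h2 : (lamMap R S A a : ∀ s : S, A ⧸ smulTop R (s : R) A) t = 0 := by
        rw [h]; rfl
      rwa [lamMap_apply_coe, Submodule.Quotient.mk_eq_zero] at h2
    · intro h
      apply Subtype.ext; funext t
      exact (Submodule.Quotient.mk_eq_zero _).mpr (h t)
  refine ⟨?_, ?_, h3⟩
  · -- kernel
    intro s
    constructor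
    · intro x y hxy
      exact Subtype.ext (hcanc s (congrArg Subtype.val hxy))
    · rintro ⟨a, ha⟩
      obtain ⟨b, hb⟩ := mem_smulTop.mp ((hker a).mp ha s)
      have hbker : b ∈ LinearMap.ker (lamMap R S A) := by
        rw [hker]
        intro t
        obtain ⟨c, hc⟩ := mem_smulTop.mp ((hker a).mp ha (s * t))
        rw [Submonoid.coe_mul, mul_smul, ← hb] at hc
        exact mem_smulTop.mpr ⟨c, hcanc s hc⟩
      exact ⟨⟨b, hbker⟩, Subtype.ext hb⟩
  · -- cokernel
    intro s
    constructor
    · -- injectivity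
      have hzero : ∀ z : (sCompletion R S A) ⧸ LinearMap.range (lamMap R S A),
          (s : R) • z = 0 → z = 0 := by
        intro z hz
        obtain ⟨x, rfl⟩ := Submodule.Quotient.mk_surjective _ z
        rw [← Submodule.Quotient.mk_smul, Submodule.Quotient.mk_eq_zero] at hz
        obtain ⟨a, hAa⟩ := hz
        obtain ⟨u, hu⟩ := Submodule.Quotient.mk_surjective _ (x.1 s)
        have hcomp : (Submodule.Quotient.mk a : A ⧸ smulTop R (s : R) A) =
            Submodule.Quotient.mk ((s : R) • u) := by
          have := congrArg (fun z : sCompletion R S A =>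
            (z : ∀ s : S, A ⧸ smulTop R (s : R) A) s) hAa
          simp only [lamMap_apply_coe] at this
          rw [this]
          show (s : R) • (x.1 s) = _
          rw [← hu, ← Submodule.Quotient.mk_smul]
        obtain ⟨v, hv⟩ := mem_smulTop.mp ((Submodule.Quotient.eq _).mp hcomp)
        have haeq : a = (s : R) • (u + v) := by rw [smul_add, hv]; abel
        have : x = lamMap R S A (u + v) := by
          have hz : (s : R) • (x - lamMap R S A (u + v)) = 0 := by
            rw [smul_sub, ← map_smul, ← haeq, hAa, sub_self]
          exact sub_eq_zero.mp (h3 s _ hz)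
        rw [Submodule.Quotient.mk_eq_zero, this]
        exact ⟨u + v, rfl⟩
      intro z w hzw
      have : (s : R) • (z - w) = 0 := by
        rw [smul_sub, sub_eq_zero]; exact hzw
      have := hzero _ this
      exact sub_eq_zero.mp this
    · -- surjectivity
      intro z
      obtain ⟨x, rfl⟩ := Submodule.Quotient.mk_surjective _ z
      -- choose lifts
      obtain ⟨a, ha⟩ := Submodule.Quotient.mk_surjective _ (x.1 s)
      have hc : ∀ t : S, ∃ c : A,
          (Submodule.Quotient.mk c : A ⧸ smulTop R ((s * t : S) : R) A) = x.1 (s * t) :=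
        fun t => Submodule.Quotient.mk_surjective _ (x.1 (s * t))
      choose c hc using hc
      have hdvds : ∀ t : S, (s : R) ∣ ((s * t : S) : R) :=
        fun t => ⟨(t : R), Submonoid.coe_mul S s t⟩
      have hdvdt : ∀ t : S, (t : R) ∣ ((s * t : S) : R) :=
        fun t => ⟨(s : R), by rw [Submonoid.coe_mul, mul_comm]⟩
      have hca : ∀ t : S, ∃ b : A, (s : R) • b = c t - a := by
        intro t
        apply mem_smulTop.mp
        rw [← Submodule.Quotient.eq (smulTop R (s : R) A)]
        have := x.2 s (s * t) (hdvds t)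
        rw [← hc t, transMap_mk] at this
        rw [this, ha]
      choose b hb using hca
      -- the compatible family y
      have hymem : (fun t : S => (Submodule.Quotient.mk (b t) : A ⧸ smulTop R (t : R) A))
          ∈ sCompletion R S A := by
        intro t t' hdvd
        rw [transMap_mk, Submodule.Quotient.eq]
        obtain ⟨d, hd⟩ := hdvd
        have hdvdst : ((s * t : S) : R) ∣ ((s * t' : S) : R) := by
          refine ⟨d, ?_⟩
          rw [Submonoid.coe_mul, Submonoid.coe_mul, hd, mul_assoc]
        have hcc := x.2 (s * t) (s * t') hdvdst
        rw [← hc t', transMap_mk, ← hc t, Submodule.Quotient.eq] at hcc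
        obtain ⟨e, he⟩ := mem_smulTop.mp hcc
        rw [Submonoid.coe_mul, mul_smul] at he
        have : (s : R) • (b t' - b t) = (s : R) • ((t : R) • e) := by
          rw [he, smul_sub, hb t', hb t]; abel
        exact mem_smulTop.mpr ⟨e, (hcanc s this).symm⟩
      set y : sCompletion R S A := ⟨_, hymem⟩ with hy
      have key : (s : R) • y + lamMap R S A a = x := by
        apply Subtype.ext; funext t
        show (s : R) • (Submodule.Quotient.mk (b t)) + Submodule.Quotient.mk a = x.1 t
        rw [← Submodule.Quotient.mk_smul, ← Submodule.Quotient.mk_add, hb t]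
        have := x.2 t (s * t) (hdvdt t)
        rw [← hc t, transMap_mk] at this
        rw [← this]
        congr 1
        abel
      refine ⟨Submodule.Quotient.mk y, ?_⟩
      show (s : R) • Submodule.Quotient.mk y = _
      rw [← Submodule.Quotient.mk_smul, Submodule.Quotient.eq, ← key]
      refine ⟨-a, ?_⟩
      rw [map_neg]
      abel
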